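/- Let α, β : ℤ → ℕ be finitely supported with equal finite total mass |α| = |β| ≥ 1 and zero momentum ∑_{i∈ℤ} i·(α_i − β_i) = 0. Then for every j ∈ ℤ with α_j + β_j ≥ 1 one has ⌈j⌉² ≤ ∏_{i∈ℤ} ⌈i⌉^{α_i+β_i}. -/

import Mathlib

open scoped BigOperators

noncomputable def jml (j : ℤ) : ℝ := max (|(j : ℝ)|) 2

lemma two_le_jml (i : ℤ) : 2 ≤ jml i := le_max_right _ _
lemma abs_le_jml (i : ℤ) : |(i : ℝ)| ≤ jml i := le_max_left _ _
lemma one_le_jml (i : ℤ) : 1 ≤ jml i := le_trans one_le_two (two_le_jml i)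

lemma one_le_prod_jml (m : ℤ → ℕ) (T : Finset ℤ) :
    1 ≤ ∏ i ∈ T, jml i ^ m i := by
  calc (1:ℝ) = ∏ _i ∈ T, 1 := by simp
    _ ≤ ∏ i ∈ T, jml i ^ m i :=
      Finset.prod_le_prod (fun i _ => zero_le_one) (fun i _ => one_le_pow₀ (one_le_jml i))

lemma mul_nat_le_pow {c : ℝ} (hc : 2 ≤ c) {k : ℕ} (hk : 1 ≤ k) :
    c * k ≤ c ^ k := by
  have h1 : (k : ℝ) ≤ 2 ^ (k - 1) := by
    have := Nat.lt_two_pow_self (n := k - 1)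
    have : k ≤ 2 ^ (k - 1) := by omega
    exact_mod_cast this
  have h2 : (2:ℝ) ^ (k-1) ≤ c ^ (k-1) := pow_le_pow_left₀ (by norm_num) hc _
  have h0 : (0:ℝ) ≤ c := by linarith
  calc c * k ≤ c * c ^ (k-1) := by nlinarith
    _ = c ^ k := by rw [← pow_succ']; congr 1; omega

lemma sum_le_prod_jml (m : ℤ → ℕ) (T : Finset ℤ) :
    ∑ i ∈ T, jml i * m i ≤ ∏ i ∈ T, jml i ^ m i := by
  have key : (∑ i ∈ T, jml i * m i ≤ ∏ i ∈ T, jml i ^ m i) ∧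
      (∑ i ∈ T, jml i * m i ≠ 0 → 2 ≤ ∏ i ∈ T, jml i ^ m i) := by
    induction T using Finset.induction_on with
    | empty => simp
    | @insert a T ha ih =>
      obtain ⟨ih1, ih2⟩ := ih
      rw [Finset.sum_insert ha, Finset.prod_insert ha]
      set S := ∑ i ∈ T, jml i * m i
      set P := ∏ i ∈ T, jml i ^ m i
      have hP1 : 1 ≤ P := one_le_prod_jml m T
      have hc : 2 ≤ jml a := two_le_jml a
      rcases Nat.eq_zero_or_pos (m a) with hk | hk
      · simp only [hk] at *
        constructor
        · simpa using ih1
        · intro h; simp at h ⊢; exact ih2 (by simpa using h)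
      · have hck : jml a * m a ≤ jml a ^ m a := mul_nat_le_pow hc hk
        have hck2 : (2:ℝ) ≤ jml a ^ m a := by
          calc (2:ℝ) ≤ jml a := hc
            _ ≤ jml a ^ m a := le_self_pow₀ (one_le_jml a) (by omega)
        have hS0 : 0 ≤ S := Finset.sum_nonneg fun i _ => by
          have := one_le_jml i; positivity
        constructor
        · rcases eq_or_ne S 0 with h | h
          · rw [h]; nlinarith
          · have hP2 : 2 ≤ P := ih2 h
            nlinarith
        · intro _
          nlinarith
  exact key.1

theorem jml_sq_le_prod
    (α β : ℤ →₀ ℕ)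
    (hmass : (α.sum fun _ n => n) = β.sum fun _ n => n)
    (hmass1 : 1 ≤ α.sum fun _ n => n)
    (hmom : ∑ i ∈ α.support ∪ β.support, (i : ℝ) * ((α i : ℝ) - (β i : ℝ)) = 0)
    (j : ℤ) (hj : 1 ≤ α j + β j) :
    jml j ^ 2 ≤ ∏ i ∈ α.support ∪ β.support, jml i ^ (α i + β i) := by
  classical
  set S := α.support ∪ β.support with hS
  set m : ℤ → ℕ := fun i => α i + β i with hm
  have hjS : j ∈ S := by
    rw [hS, Finset.mem_union, Finsupp.mem_support_iff, Finsupp.mem_support_iff]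
    omega
  have hprod : ∏ i ∈ S, jml i ^ m i = jml j ^ m j * ∏ i ∈ S.erase j, jml i ^ m i :=
    (Finset.mul_prod_erase S _ hjS).symm
  have hP1 : 1 ≤ ∏ i ∈ S.erase j, jml i ^ m i := one_le_prod_jml m _
  rcases le_or_gt 2 (m j) with h2 | h2
  · calc jml j ^ 2 ≤ jml j ^ m j := pow_le_pow_right₀ (one_le_jml j) h2
      _ ≤ jml j ^ m j * ∏ i ∈ S.erase j, jml i ^ m i := by
          nlinarith [pow_pos (lt_of_lt_of_le two_pos (two_le_jml j)) (m j)]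
      _ = ∏ i ∈ S, jml i ^ m i := hprod.symm
  · have h2' : α j + β j < 2 := h2
    have hmj : m j = 1 := by show α j + β j = 1; omega
    -- total mass over S
    have hsA : ∑ i ∈ S, α i = α.sum fun _ n => n := by
      rw [Finsupp.sum]
      exact (Finset.sum_subset Finset.subset_union_left
        (fun x _ hx => Finsupp.notMem_support_iff.mp hx)).symm
    have hsB : ∑ i ∈ S, β i = β.sum fun _ n => n := by
      rw [Finsupp.sum]
      exact (Finset.sum_subset Finset.subset_union_right
        (fun x _ hx => Finsupp.notMem_support_iff.mp hx)).symm
    have htot : 2 ≤ ∑ i ∈ S, m i := by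
      have hsum : ∑ i ∈ S, m i = (∑ i ∈ S, α i) + ∑ i ∈ S, β i := by
        simp only [hm]; rw [← Finset.sum_add_distrib]
      omega
    have herase_sum : 1 ≤ ∑ i ∈ S.erase j, m i := by
      have h := Finset.add_sum_erase S m hjS
      omega
    obtain ⟨k, hkmem, hk⟩ : ∃ k ∈ S.erase j, m k ≠ 0 := by
      by_contra h
      push_neg at h
      have : ∑ i ∈ S.erase j, m i = 0 := Finset.sum_eq_zero h
      omega
    have hP2 : 2 ≤ ∏ i ∈ S.erase j, jml i ^ m i := by
      have hrw := (Finset.mul_prod_erase (S.erase j) (fun i => jml i ^ m i) hkmem).symm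
      have h1 : 1 ≤ ∏ i ∈ (S.erase j).erase k, jml i ^ m i := one_le_prod_jml m _
      have h2k : (2:ℝ) ≤ jml k ^ m k :=
        le_trans (two_le_jml k) (le_self_pow₀ (one_le_jml k) hk)
      rw [hrw]
      nlinarith
    -- momentum
    have hmom' : (j : ℝ) * ((α j : ℝ) - β j)
        + ∑ i ∈ S.erase j, (i : ℝ) * ((α i : ℝ) - β i) = 0 := by
      rw [Finset.add_sum_erase S (fun i => (i : ℝ) * ((α i : ℝ) - β i)) hjS]; exact hmom
    have hmj' : α j + β j = 1 := hmj
    have habsj : |((j:ℝ) * ((α j : ℝ) - β j))| = |(j:ℝ)| := by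
      have : α j = 1 ∧ β j = 0 ∨ α j = 0 ∧ β j = 1 := by omega
      rcases this with ⟨h1, h2⟩ | ⟨h1, h2⟩ <;> simp [h1, h2, abs_mul]
    have hPj : |(j:ℝ)| ≤ ∏ i ∈ S.erase j, jml i ^ m i := by
      calc |(j:ℝ)| = |(j : ℝ) * ((α j : ℝ) - β j)| := habsj.symm
        _ = |∑ i ∈ S.erase j, (i : ℝ) * ((α i : ℝ) - β i)| := by
            rw [abs_eq_abs]; right; linarith
        _ ≤ ∑ i ∈ S.erase j, |(i : ℝ) * ((α i : ℝ) - β i)| :=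
            Finset.abs_sum_le_sum_abs _ _
        _ ≤ ∑ i ∈ S.erase j, jml i * m i := by
            apply Finset.sum_le_sum
            intro i _
            rw [abs_mul]
            apply mul_le_mul (abs_le_jml i) _ (abs_nonneg _)
              (le_trans zero_le_two (two_le_jml i))
            calc |(α i : ℝ) - β i| ≤ |(α i : ℝ)| + |(β i : ℝ)| := abs_sub _ _
              _ = (m i : ℝ) := by simp [hm]
        _ ≤ ∏ i ∈ S.erase j, jml i ^ m i := sum_le_prod_jml m _
    have hPge : jml j ≤ ∏ i ∈ S.erase j, jml i ^ m i := max_le hPj hP2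
    rw [hprod, hmj, pow_one]
    have h0 : 0 ≤ jml j := le_trans zero_le_two (two_le_jml j)
    nlinarith
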